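/- If m, n, p ≥ 3, then every embedded cycle in the link graph L_{m,n,p} has length at least 6. -/
import Mathlib


/-- The generators of the presentation `I_{m,n,p}`:
`x, y, z`, the Artin generators `a, b, c`, and the extra generators
`d₃, …, d_m`, `e₃, …, e_n`, `f₃, …, f_p`. -/
inductive IGen (m n p : ℕ) where
  | x | y | z | a | b | c
  | d (i : Fin (m - 2))
  | e (i : Fin (n - 2))
  | f (i : Fin (p - 2))
deriving DecidableEq

/-- `dSeq m n p i` is `d_i` for `1 ≤ i ≤ m`, where `d₁ = a`, `d₂ = b`. -/
def dSeq (m n p : ℕ) (i : ℕ) : IGen m n p :=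
  if i = 1 then .a else if i = 2 then .b
  else if h : i - 3 < m - 2 then .d ⟨i - 3, h⟩ else .a

/-- `eSeq m n p i` is `e_i` for `1 ≤ i ≤ n`, where `e₁ = b`, `e₂ = c`. -/
def eSeq (m n p : ℕ) (i : ℕ) : IGen m n p :=
  if i = 1 then .b else if i = 2 then .c
  else if h : i - 3 < n - 2 then .e ⟨i - 3, h⟩ else .b

/-- `fSeq m n p i` is `f_i` for `1 ≤ i ≤ p`, where `f₁ = c`, `f₂ = a`. -/
def fSeq (m n p : ℕ) (i : ℕ) : IGen m n p :=
  if i = 1 then .c else if i = 2 then .a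
  else if h : i - 3 < p - 2 then .f ⟨i - 3, h⟩ else .c

/-- The triples `(w, g, h)` such that `w = g·h` is a relation of `I_{m,n,p}`. -/
def relTriples (m n p : ℕ) : Set (IGen m n p × IGen m n p × IGen m n p) :=
  {t | (∃ i : ℕ, 1 ≤ i ∧ i ≤ m ∧
          t = (.x, dSeq m n p i, dSeq m n p (i % m + 1))) ∨
       (∃ i : ℕ, 1 ≤ i ∧ i ≤ n ∧
          t = (.y, eSeq m n p i, eSeq m n p (i % n + 1))) ∨
       (∃ i : ℕ, 1 ≤ i ∧ i ≤ p ∧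
          t = (.z, fSeq m n p i, fSeq m n p (i % p + 1)))}

/-- Vertices of the link `L_{m,n,p}`: a pair of vertices for each generator of
`I_{m,n,p}`; the Boolean is `true` for the barred vertex (tail of the 1-cell)
and `false` for the unbarred vertex (head). -/
abbrev LinkVert (m n p : ℕ) := IGen m n p × Bool

/-- Each relation `w = g·h` (a triangular 2-cell) contributes to the link the three
corner edges `{ḡ, h}`, `{w, g}` and `{h̄, w̄}`. -/
def linkRel (m n p : ℕ) (u v : LinkVert m n p) : Prop :=
  ∃ t ∈ relTriples m n p,
    ((u, v) = ((t.2.1, true), (t.2.2, false)) ∨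
     (u, v) = ((t.1, false), (t.2.1, false)) ∨
     (u, v) = ((t.2.2, true), (t.1, true)))

/-- The link `L_{m,n,p}` of the unique 0-cell of the 2-complex `K_{m,n,p}`. -/
def Link (m n p : ℕ) : SimpleGraph (LinkVert m n p) :=
  SimpleGraph.fromRel (linkRel m n p)

/-- The level of a vertex of the link: `x̄, ȳ, z̄` at level 1; barred generators at
level 2; unbarred generators at level 3; `x, y, z` at level 4. -/
def lvl {m n p : ℕ} : LinkVert m n p → ℕ
  | (.x, true) => 1 | (.y, true) => 1 | (.z, true) => 1
  | (.x, false) => 4 | (.y, false) => 4 | (.z, false) => 4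
  | (_, true) => 2
  | (_, false) => 3

namespace LinkAux
open IGen

variable {m n p : ℕ}

theorem dSeq_one : dSeq m n p 1 = .a := by simp [dSeq]
theorem dSeq_two (hm : 3 ≤ m) : dSeq m n p 2 = .b := by simp [dSeq]
theorem dSeq_mid {i : ℕ} (h3 : 3 ≤ i) (hi : i ≤ m) :
    dSeq m n p i = .d ⟨i - 3, by omega⟩ := by
  unfold dSeq
  rw [if_neg (by omega), if_neg (by omega), dif_pos (by omega)]

theorem eSeq_one : eSeq m n p 1 = .b := by simp [eSeq]
theorem eSeq_two (hn : 3 ≤ n) : eSeq m n p 2 = .c := by simp [eSeq]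
theorem eSeq_mid {i : ℕ} (h3 : 3 ≤ i) (hi : i ≤ n) :
    eSeq m n p i = .e ⟨i - 3, by omega⟩ := by
  unfold eSeq
  rw [if_neg (by omega), if_neg (by omega), dif_pos (by omega)]

theorem fSeq_one : fSeq m n p 1 = .c := by simp [fSeq]
theorem fSeq_two (hp : 3 ≤ p) : fSeq m n p 2 = .a := by simp [fSeq]
theorem fSeq_mid {i : ℕ} (h3 : 3 ≤ i) (hi : i ≤ p) :
    fSeq m n p i = .f ⟨i - 3, by omega⟩ := by
  unfold fSeq
  rw [if_neg (by omega), if_neg (by omega), dif_pos (by omega)]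

theorem rel_char (hm : 3 ≤ m) (hn : 3 ≤ n) (hp : 3 ≤ p)
    {t : IGen m n p × IGen m n p × IGen m n p} (ht : t ∈ relTriples m n p) :
    t = (.x, .a, .b) ∨
    (∃ j : Fin (m-2), j.val = 0 ∧ t = (.x, .b, .d j)) ∨
    (∃ j k : Fin (m-2), k.val = j.val + 1 ∧ k.val < m - 2 ∧ t = (.x, .d j, .d k)) ∨
    (∃ j : Fin (m-2), j.val = m - 3 ∧ t = (.x, .d j, .a)) ∨
    t = (.y, .b, .c) ∨
    (∃ j : Fin (n-2), j.val = 0 ∧ t = (.y, .c, .e j)) ∨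
    (∃ j k : Fin (n-2), k.val = j.val + 1 ∧ k.val < n - 2 ∧ t = (.y, .e j, .e k)) ∨
    (∃ j : Fin (n-2), j.val = n - 3 ∧ t = (.y, .e j, .b)) ∨
    t = (.z, .c, .a) ∨
    (∃ j : Fin (p-2), j.val = 0 ∧ t = (.z, .a, .f j)) ∨
    (∃ j k : Fin (p-2), k.val = j.val + 1 ∧ k.val < p - 2 ∧ t = (.z, .f j, .f k)) ∨
    (∃ j : Fin (p-2), j.val = p - 3 ∧ t = (.z, .f j, .c)) := by
  simp only [relTriples, Set.mem_setOf_eq] at ht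
  rcases ht with ⟨i, h1, h2, rfl⟩ | ⟨i, h1, h2, rfl⟩ | ⟨i, h1, h2, rfl⟩
  · -- x family
    by_cases hlt : i < m
    · have hmod : i % m = i := Nat.mod_eq_of_lt hlt
      rw [hmod]
      by_cases hi1 : i = 1
      · subst hi1; left
        rw [dSeq_one, dSeq_two hm]
      · by_cases hi2 : i = 2
        · subst hi2; right; left
          refine ⟨⟨0, by omega⟩, rfl, ?_⟩
          rw [dSeq_two hm, dSeq_mid (i := 3) (by omega) (by omega)]
        · right; right; left
          refine ⟨⟨i - 3, by omega⟩, ⟨i - 2, by omega⟩,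
            by show i - 2 = i - 3 + 1; omega, by show i - 2 < m - 2; omega, ?_⟩
          rw [dSeq_mid (i := i) (by omega) (by omega),
            dSeq_mid (i := i + 1) (by omega) (by omega)]
          simp only [Prod.mk.injEq, IGen.d.injEq, Fin.mk.injEq, true_and, and_true]
          omega
    · have heq : i = m := by omega
      subst heq
      right; right; right; left
      refine ⟨⟨i - 3, by omega⟩, rfl, ?_⟩
      rw [Nat.mod_self, dSeq_one, dSeq_mid (i := i) (by omega) (le_refl i)]
  · -- y family
    by_cases hlt : i < n
    · have hmod : i % n = i := Nat.mod_eq_of_lt hlt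
      rw [hmod]
      by_cases hi1 : i = 1
      · subst hi1; right; right; right; right; left
        rw [eSeq_one, eSeq_two hn]
      · by_cases hi2 : i = 2
        · subst hi2; right; right; right; right; right; left
          refine ⟨⟨0, by omega⟩, rfl, ?_⟩
          rw [eSeq_two hn, eSeq_mid (i := 3) (by omega) (by omega)]
        · right; right; right; right; right; right; left
          refine ⟨⟨i - 3, by omega⟩, ⟨i - 2, by omega⟩,
            by show i - 2 = i - 3 + 1; omega, by show i - 2 < n - 2; omega, ?_⟩
          rw [eSeq_mid (i := i) (by omega) (by omega),
            eSeq_mid (i := i + 1) (by omega) (by omega)]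
          simp only [Prod.mk.injEq, IGen.e.injEq, Fin.mk.injEq, true_and, and_true]
          omega
    · have heq : i = n := by omega
      subst heq
      right; right; right; right; right; right; right; left
      refine ⟨⟨i - 3, by omega⟩, rfl, ?_⟩
      rw [Nat.mod_self, eSeq_one, eSeq_mid (i := i) (by omega) (le_refl i)]
  · -- z family
    by_cases hlt : i < p
    · have hmod : i % p = i := Nat.mod_eq_of_lt hlt
      rw [hmod]
      by_cases hi1 : i = 1
      · subst hi1; right; right; right; right; right; right; right; right; left
        rw [fSeq_one, fSeq_two hp]
      · by_cases hi2 : i = 2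
        · subst hi2
          right; right; right; right; right; right; right; right; right; left
          refine ⟨⟨0, by omega⟩, rfl, ?_⟩
          rw [fSeq_two hp, fSeq_mid (i := 3) (by omega) (by omega)]
        · right; right; right; right; right; right; right; right; right; right; left
          refine ⟨⟨i - 3, by omega⟩, ⟨i - 2, by omega⟩,
            by show i - 2 = i - 3 + 1; omega, by show i - 2 < p - 2; omega, ?_⟩
          rw [fSeq_mid (i := i) (by omega) (by omega),
            fSeq_mid (i := i + 1) (by omega) (by omega)]
          simp only [Prod.mk.injEq, IGen.f.injEq, Fin.mk.injEq, true_and, and_true]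
          omega
    · have heq : i = p := by omega
      subst heq
      right; right; right; right; right; right; right; right; right; right; right
      refine ⟨⟨i - 3, by omega⟩, rfl, ?_⟩
      rw [Nat.mod_self, fSeq_one, fSeq_mid (i := i) (by omega) (le_refl i)]

/-- The possible relation types (`x`, `y` or `z`) in which a generator can occur
as a first or second factor. -/
def fam {m n p : ℕ} (g w : IGen m n p) : Prop :=
  match g with
  | .a => w = .x ∨ w = .z
  | .b => w = .x ∨ w = .y
  | .c => w = .y ∨ w = .z
  | .d _ => w = .x
  | .e _ => w = .y
  | .f _ => w = .z
  | _ => False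

theorem rel_w (hm : 3 ≤ m) (hn : 3 ≤ n) (hp : 3 ≤ p)
    {t : IGen m n p × IGen m n p × IGen m n p} (ht : t ∈ relTriples m n p) :
    t.1 = .x ∨ t.1 = .y ∨ t.1 = .z := by
  rcases rel_char hm hn hp ht with c|⟨j1,e1,c⟩|⟨j1,k1,e1,b1,c⟩|⟨j1,e1,c⟩|c|⟨j1,e1,c⟩|⟨j1,k1,e1,b1,c⟩|⟨j1,e1,c⟩|c|⟨j1,e1,c⟩|⟨j1,k1,e1,b1,c⟩|⟨j1,e1,c⟩ <;> simp_all

theorem rel_fam1 (hm : 3 ≤ m) (hn : 3 ≤ n) (hp : 3 ≤ p)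
    {w g h : IGen m n p} (ht : (w, g, h) ∈ relTriples m n p) :
    fam g w := by
  rcases rel_char hm hn hp ht with c|⟨j1,e1,c⟩|⟨j1,k1,e1,b1,c⟩|⟨j1,e1,c⟩|c|⟨j1,e1,c⟩|⟨j1,k1,e1,b1,c⟩|⟨j1,e1,c⟩|c|⟨j1,e1,c⟩|⟨j1,k1,e1,b1,c⟩|⟨j1,e1,c⟩ <;> simp_all [fam]

theorem rel_fam2 (hm : 3 ≤ m) (hn : 3 ≤ n) (hp : 3 ≤ p)
    {w g h : IGen m n p} (ht : (w, g, h) ∈ relTriples m n p) :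
    fam h w := by
  rcases rel_char hm hn hp ht with c|⟨j1,e1,c⟩|⟨j1,k1,e1,b1,c⟩|⟨j1,e1,c⟩|c|⟨j1,e1,c⟩|⟨j1,k1,e1,b1,c⟩|⟨j1,e1,c⟩|c|⟨j1,e1,c⟩|⟨j1,k1,e1,b1,c⟩|⟨j1,e1,c⟩ <;> simp_all [fam]

theorem fam_not_xyz {g w : IGen m n p} (h : fam g w) :
    g ≠ .x ∧ g ≠ .y ∧ g ≠ .z := by
  cases g <;> simp_all [fam]

theorem two_rels_same_g (hm : 3 ≤ m) (hn : 3 ≤ n) (hp : 3 ≤ p)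
    {w g h w' h' : IGen m n p}
    (h1 : (w, g, h) ∈ relTriples m n p) (h2 : (w', g, h') ∈ relTriples m n p) :
    (w = w' ∧ h = h') ∨
    (g = .a ∧ ((w = .x ∧ h = .b ∧ w' = .z ∧ ∃ j : Fin (p-2), j.val = 0 ∧ h' = .f j) ∨
               (w' = .x ∧ h' = .b ∧ w = .z ∧ ∃ j : Fin (p-2), j.val = 0 ∧ h = .f j))) ∨
    (g = .b ∧ ((w = .x ∧ (∃ j : Fin (m-2), j.val = 0 ∧ h = .d j) ∧ w' = .y ∧ h' = .c) ∨
               (w' = .x ∧ (∃ j : Fin (m-2), j.val = 0 ∧ h' = .d j) ∧ w = .y ∧ h = .c))) ∨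
    (g = .c ∧ ((w = .y ∧ (∃ j : Fin (n-2), j.val = 0 ∧ h = .e j) ∧ w' = .z ∧ h' = .a) ∨
               (w' = .y ∧ (∃ j : Fin (n-2), j.val = 0 ∧ h' = .e j) ∧ w = .z ∧ h = .a))) := by
  rcases rel_char hm hn hp h1 with c|⟨j1,e1,c⟩|⟨j1,k1,e1,b1,c⟩|⟨j1,e1,c⟩|c|⟨j1,e1,c⟩|⟨j1,k1,e1,b1,c⟩|⟨j1,e1,c⟩|c|⟨j1,e1,c⟩|⟨j1,k1,e1,b1,c⟩|⟨j1,e1,c⟩ <;>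
    rcases rel_char hm hn hp h2 with d2|⟨j2,e2,d2⟩|⟨j2,k2,e2,b2,d2⟩|⟨j2,e2,d2⟩|d2|⟨j2,e2,d2⟩|⟨j2,k2,e2,b2,d2⟩|⟨j2,e2,d2⟩|d2|⟨j2,e2,d2⟩|⟨j2,k2,e2,b2,d2⟩|⟨j2,e2,d2⟩ <;>
      simp_all [Fin.ext_iff] <;>
        first
          | omega
          | exact ⟨⟨0, by omega⟩, rfl, rfl⟩
          | exact ⟨⟨m - 3, by omega⟩, rfl, rfl⟩
          | exact ⟨⟨n - 3, by omega⟩, rfl, rfl⟩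
          | exact ⟨⟨p - 3, by omega⟩, rfl, rfl⟩

theorem two_rels_same_h (hm : 3 ≤ m) (hn : 3 ≤ n) (hp : 3 ≤ p)
    {w g h w' g' : IGen m n p}
    (h1 : (w, g, h) ∈ relTriples m n p) (h2 : (w', g', h) ∈ relTriples m n p) :
    (w = w' ∧ g = g') ∨
    (h = .a ∧ ((w = .x ∧ (∃ j : Fin (m-2), j.val = m - 3 ∧ g = .d j) ∧ w' = .z ∧ g' = .c) ∨
               (w' = .x ∧ (∃ j : Fin (m-2), j.val = m - 3 ∧ g' = .d j) ∧ w = .z ∧ g = .c))) ∨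
    (h = .b ∧ ((w = .x ∧ g = .a ∧ w' = .y ∧ (∃ j : Fin (n-2), j.val = n - 3 ∧ g' = .e j)) ∨
               (w' = .x ∧ g' = .a ∧ w = .y ∧ (∃ j : Fin (n-2), j.val = n - 3 ∧ g = .e j)))) ∨
    (h = .c ∧ ((w = .y ∧ g = .b ∧ w' = .z ∧ (∃ j : Fin (p-2), j.val = p - 3 ∧ g' = .f j)) ∨
               (w' = .y ∧ g' = .b ∧ w = .z ∧ (∃ j : Fin (p-2), j.val = p - 3 ∧ g = .f j)))) := by
  rcases rel_char hm hn hp h1 with c|⟨j1,e1,c⟩|⟨j1,k1,e1,b1,c⟩|⟨j1,e1,c⟩|c|⟨j1,e1,c⟩|⟨j1,k1,e1,b1,c⟩|⟨j1,e1,c⟩|c|⟨j1,e1,c⟩|⟨j1,k1,e1,b1,c⟩|⟨j1,e1,c⟩ <;>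
    rcases rel_char hm hn hp h2 with d2|⟨j2,e2,d2⟩|⟨j2,k2,e2,b2,d2⟩|⟨j2,e2,d2⟩|d2|⟨j2,e2,d2⟩|⟨j2,k2,e2,b2,d2⟩|⟨j2,e2,d2⟩|d2|⟨j2,e2,d2⟩|⟨j2,k2,e2,b2,d2⟩|⟨j2,e2,d2⟩ <;>
      simp_all [Fin.ext_iff] <;>
        first
          | omega
          | exact ⟨⟨0, by omega⟩, rfl, rfl⟩
          | exact ⟨⟨m - 3, by omega⟩, rfl, rfl⟩
          | exact ⟨⟨n - 3, by omega⟩, rfl, rfl⟩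
          | exact ⟨⟨p - 3, by omega⟩, rfl, rfl⟩


theorem nbr_barred (hm : 3 ≤ m) (hn : 3 ≤ n) (hp : 3 ≤ p)
    {g : IGen m n p} {u : LinkVert m n p}
    (hgx : g ≠ .x) (hgy : g ≠ .y) (hgz : g ≠ .z)
    (h : (Link m n p).Adj (g, true) u) :
    (∃ w s, (w, g, s) ∈ relTriples m n p ∧ u = (s, false)) ∨
    (∃ w g₀, (w, g₀, g) ∈ relTriples m n p ∧ u = (w, true)) := by
  rw [Link, SimpleGraph.fromRel_adj] at h
  obtain ⟨hne, h | h⟩ := h <;> obtain ⟨t, ht, hc⟩ := h <;>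
      rcases hc with hc | hc | hc <;>
      simp only [Prod.mk.injEq] at hc
  · exact Or.inl ⟨t.1, t.2.2, by rw [hc.1.1]; exact ht, hc.2⟩
  · simp at hc
  · exact Or.inr ⟨t.1, t.2.1, by rw [hc.1.1]; exact ht, hc.2⟩
  · simp at hc
  · simp at hc
  · exfalso
    rcases rel_w hm hn hp ht with hw | hw | hw <;>
      rw [hw] at hc <;> simp_all
theorem nbr_unbarred (hm : 3 ≤ m) (hn : 3 ≤ n) (hp : 3 ≤ p)
    {g : IGen m n p} {u : LinkVert m n p}
    (hgx : g ≠ .x) (hgy : g ≠ .y) (hgz : g ≠ .z)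
    (h : (Link m n p).Adj (g, false) u) :
    (∃ w g₀, (w, g₀, g) ∈ relTriples m n p ∧ u = (g₀, true)) ∨
    (∃ w s, (w, g, s) ∈ relTriples m n p ∧ u = (w, false)) := by
  rw [Link, SimpleGraph.fromRel_adj] at h
  obtain ⟨hne, h | h⟩ := h <;> obtain ⟨t, ht, hc⟩ := h <;>
      rcases hc with hc | hc | hc <;>
      simp only [Prod.mk.injEq] at hc
  · simp at hc
  · exfalso
    rcases rel_w hm hn hp ht with hw | hw | hw <;>
      rw [hw] at hc <;> simp_all
  · simp at hc
  · exact Or.inl ⟨t.1, t.2.1, by rw [hc.2.1]; exact ht, hc.1⟩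
  · exact Or.inr ⟨t.1, t.2.2, by rw [hc.2.1]; exact ht, hc.1⟩
  · simp at hc

theorem cn2 (hm : 3 ≤ m) (hn : 3 ≤ n) (hp : 3 ≤ p) {g g' : IGen m n p}
    {u v : LinkVert m n p}
    (hgx : g ≠ .x) (hgy : g ≠ .y) (hgz : g ≠ .z)
    (hg'x : g' ≠ .x) (hg'y : g' ≠ .y) (hg'z : g' ≠ .z)
    (hgg' : g ≠ g') (huv : u ≠ v)
    (h1 : (Link m n p).Adj (g, true) u) (h2 : (Link m n p).Adj (g', true) u)
    (h3 : (Link m n p).Adj (g, true) v) (h4 : (Link m n p).Adj (g', true) v) :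
    False := by
  rcases nbr_barred hm hn hp hgx hgy hgz h1 with ⟨w1, s1, r1, hu1⟩ | ⟨w1, a1, r1, hu1⟩ <;>
    rcases nbr_barred hm hn hp hg'x hg'y hg'z h2 with ⟨w2, s2, r2, hu2⟩ | ⟨w2, a2, r2, hu2⟩ <;>
    rcases nbr_barred hm hn hp hgx hgy hgz h3 with ⟨w3, s3, r3, hv3⟩ | ⟨w3, a3, r3, hv3⟩ <;>
    rcases nbr_barred hm hn hp hg'x hg'y hg'z h4 with ⟨w4, s4, r4, hv4⟩ | ⟨w4, a4, r4, hv4⟩ <;>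
    subst hu1 <;> subst hv3 <;> simp at hu2 hv4 huv
  -- four surviving configurations
  · -- u and v both common successors
    subst hu2; subst hv4
    have hne13 : s1 ≠ s3 := huv
    rcases Or.resolve_left (two_rels_same_g hm hn hp r1 r3) (fun hh => hne13 hh.2) with
      ⟨hg, H⟩ | ⟨hg, H⟩ | ⟨hg, H⟩ <;>
      rcases Or.resolve_left (two_rels_same_g hm hn hp r2 r4) (fun hh => hne13 hh.2) with
        ⟨hg', H'⟩ | ⟨hg', H'⟩ | ⟨hg', H'⟩ <;>
      rcases H with H | H <;> rcases H' with H' | H' <;> simp_all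
  · -- u common successor, v common relation type
    subst hu2; subst hv4
    have f3 := rel_fam2 hm hn hp r3
    have f4 := rel_fam2 hm hn hp r4
    rcases Or.resolve_left (two_rels_same_h hm hn hp r1 r2) (fun hh => hgg' hh.2) with
      ⟨hs, ⟨hw1, ⟨j, hj, hg⟩, hw2, hg'⟩ | ⟨hw2, ⟨j, hj, hg'⟩, hw1, hg⟩⟩ |
      ⟨hs, ⟨hw1, hg, hw2, j, hj, hg'⟩ | ⟨hw2, hg', hw1, j, hj, hg⟩⟩ |
      ⟨hs, ⟨hw1, hg, hw2, j, hj, hg'⟩ | ⟨hw2, hg', hw1, j, hj, hg⟩⟩ <;>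
      simp_all [fam]
  · -- u common relation type, v common successor
    subst hu2; subst hv4
    have f1 := rel_fam2 hm hn hp r1
    have f2 := rel_fam2 hm hn hp r2
    rcases Or.resolve_left (two_rels_same_h hm hn hp r3 r4) (fun hh => hgg' hh.2) with
      ⟨hs, ⟨hw3, ⟨j, hj, hg⟩, hw4, hg'⟩ | ⟨hw4, ⟨j, hj, hg'⟩, hw3, hg⟩⟩ |
      ⟨hs, ⟨hw3, hg, hw4, j, hj, hg'⟩ | ⟨hw4, hg', hw3, j, hj, hg⟩⟩ |
      ⟨hs, ⟨hw3, hg, hw4, j, hj, hg'⟩ | ⟨hw4, hg', hw3, j, hj, hg⟩⟩ <;>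
      simp_all [fam]
  · -- u and v both common relation types
    subst hu2; subst hv4
    have hne13 : w1 ≠ w3 := huv
    rcases Or.resolve_left (two_rels_same_h hm hn hp r1 r3) (fun hh => hne13 hh.1) with
      ⟨hgv, H⟩ | ⟨hgv, H⟩ | ⟨hgv, H⟩ <;>
      rcases Or.resolve_left (two_rels_same_h hm hn hp r2 r4) (fun hh => hne13 hh.1) with
        ⟨hgv', H'⟩ | ⟨hgv', H'⟩ | ⟨hgv', H'⟩ <;>
      rcases H with H | H <;> rcases H' with H' | H' <;> simp_all

theorem cn3 (hm : 3 ≤ m) (hn : 3 ≤ n) (hp : 3 ≤ p) {g g' : IGen m n p}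
    {u v : LinkVert m n p}
    (hgx : g ≠ .x) (hgy : g ≠ .y) (hgz : g ≠ .z)
    (hg'x : g' ≠ .x) (hg'y : g' ≠ .y) (hg'z : g' ≠ .z)
    (hgg' : g ≠ g') (huv : u ≠ v)
    (h1 : (Link m n p).Adj (g, false) u) (h2 : (Link m n p).Adj (g', false) u)
    (h3 : (Link m n p).Adj (g, false) v) (h4 : (Link m n p).Adj (g', false) v) :
    False := by
  rcases nbr_unbarred hm hn hp hgx hgy hgz h1 with ⟨w1, a1, r1, hu1⟩ | ⟨w1, s1, r1, hu1⟩ <;>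
    rcases nbr_unbarred hm hn hp hg'x hg'y hg'z h2 with ⟨w2, a2, r2, hu2⟩ | ⟨w2, s2, r2, hu2⟩ <;>
    rcases nbr_unbarred hm hn hp hgx hgy hgz h3 with ⟨w3, a3, r3, hv3⟩ | ⟨w3, s3, r3, hv3⟩ <;>
    rcases nbr_unbarred hm hn hp hg'x hg'y hg'z h4 with ⟨w4, a4, r4, hv4⟩ | ⟨w4, s4, r4, hv4⟩ <;>
    subst hu1 <;> subst hv3 <;> simp at hu2 hv4 huv
  · -- u and v both common predecessors
    subst hu2; subst hv4
    have hne13 : a1 ≠ a3 := huv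
    rcases Or.resolve_left (two_rels_same_g hm hn hp r1 r2) (fun hh => hgg' hh.2) with
      ⟨hg, H⟩ | ⟨hg, H⟩ | ⟨hg, H⟩ <;>
      rcases Or.resolve_left (two_rels_same_g hm hn hp r3 r4) (fun hh => hgg' hh.2) with
        ⟨hg', H'⟩ | ⟨hg', H'⟩ | ⟨hg', H'⟩ <;>
      rcases H with H | H <;> rcases H' with H' | H' <;> simp_all
  · -- u common predecessor, v common relation type
    subst hu2; subst hv4
    have f3 := rel_fam1 hm hn hp r3
    have f4 := rel_fam1 hm hn hp r4
    rcases Or.resolve_left (two_rels_same_g hm hn hp r1 r2) (fun hh => hgg' hh.2) with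
      ⟨ha, ⟨hw1, hg, hw2, j, hj, hg'⟩ | ⟨hw2, hg', hw1, j, hj, hg⟩⟩ |
      ⟨ha, ⟨hw1, ⟨j, hj, hg⟩, hw2, hg'⟩ | ⟨hw2, ⟨j, hj, hg'⟩, hw1, hg⟩⟩ |
      ⟨ha, ⟨hw1, ⟨j, hj, hg⟩, hw2, hg'⟩ | ⟨hw2, ⟨j, hj, hg'⟩, hw1, hg⟩⟩ <;>
      simp_all [fam]
  · -- u common relation type, v common predecessor
    subst hu2; subst hv4
    have f1 := rel_fam1 hm hn hp r1
    have f2 := rel_fam1 hm hn hp r2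
    rcases Or.resolve_left (two_rels_same_g hm hn hp r3 r4) (fun hh => hgg' hh.2) with
      ⟨ha, ⟨hw3, hg, hw4, j, hj, hg'⟩ | ⟨hw4, hg', hw3, j, hj, hg⟩⟩ |
      ⟨ha, ⟨hw3, ⟨j, hj, hg⟩, hw4, hg'⟩ | ⟨hw4, ⟨j, hj, hg'⟩, hw3, hg⟩⟩ |
      ⟨ha, ⟨hw3, ⟨j, hj, hg⟩, hw4, hg'⟩ | ⟨hw4, ⟨j, hj, hg'⟩, hw3, hg⟩⟩ <;>
      simp_all [fam]
  · -- u and v both common relation types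
    subst hu2; subst hv4
    have hne13 : w1 ≠ w3 := huv
    rcases Or.resolve_left (two_rels_same_g hm hn hp r1 r3) (fun hh => hne13 hh.1) with
      ⟨hgv, H⟩ | ⟨hgv, H⟩ | ⟨hgv, H⟩ <;>
      rcases Or.resolve_left (two_rels_same_g hm hn hp r2 r4) (fun hh => hne13 hh.1) with
        ⟨hgv', H'⟩ | ⟨hgv', H'⟩ | ⟨hgv', H'⟩ <;>
      rcases H with H | H <;> rcases H' with H' | H' <;> simp_all

theorem lvl_tt {g : IGen m n p} (hx : g ≠ .x) (hy : g ≠ .y) (hz : g ≠ .z) :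
    lvl (g, true) = 2 := by
  cases g <;> simp_all [lvl]

theorem lvl_ff {g : IGen m n p} (hx : g ≠ .x) (hy : g ≠ .y) (hz : g ≠ .z) :
    lvl (g, false) = 3 := by
  cases g <;> simp_all [lvl]

theorem lvl23 {g : IGen m n p} {b : Bool} (hx : g ≠ .x) (hy : g ≠ .y) (hz : g ≠ .z) :
    lvl (g, b) = if b then 2 else 3 := by
  cases b
  · simpa using lvl_ff hx hy hz
  · simpa using lvl_tt hx hy hz

theorem adj_parity (hm : 3 ≤ m) (hn : 3 ≤ n) (hp : 3 ≤ p) {u v : LinkVert m n p}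
    (h : (Link m n p).Adj u v) : lvl u % 2 ≠ lvl v % 2 := by
  have key : ∀ a b : LinkVert m n p, linkRel m n p a b → lvl a % 2 ≠ lvl b % 2 := by
    rintro a b ⟨t, ht, hc⟩
    have hfam1 := rel_fam1 hm hn hp (show (t.1, t.2.1, t.2.2) ∈ relTriples m n p from ht)
    have hfam2 := rel_fam2 hm hn hp (show (t.1, t.2.1, t.2.2) ∈ relTriples m n p from ht)
    obtain ⟨h1x, h1y, h1z⟩ := fam_not_xyz hfam1
    obtain ⟨h2x, h2y, h2z⟩ := fam_not_xyz hfam2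
    have hw := rel_w hm hn hp ht
    rcases hc with hc | hc | hc <;> rw [Prod.ext_iff] at hc <;> obtain ⟨rfl, rfl⟩ := hc
    · rw [lvl_tt h1x h1y h1z, lvl_ff h2x h2y h2z]; decide
    · rcases hw with hw | hw | hw <;> rw [hw, lvl_ff h1x h1y h1z] <;> simp [lvl]
    · rcases hw with hw | hw | hw <;> rw [hw, lvl_tt h2x h2y h2z] <;> simp [lvl]
  rw [Link, SimpleGraph.fromRel_adj] at h
  obtain ⟨hne, h | h⟩ := h
  · exact key _ _ h
  · exact Ne.symm (key _ _ h)

theorem adj_xyz_other (hm : 3 ≤ m) (hn : 3 ≤ n) (hp : 3 ≤ p) {u v : LinkVert m n p}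
    (h : (Link m n p).Adj u v) (hxyz : u.1 = .x ∨ u.1 = .y ∨ u.1 = .z) :
    v.1 ≠ .x ∧ v.1 ≠ .y ∧ v.1 ≠ .z := by
  have key : ∀ a b : LinkVert m n p, linkRel m n p a b →
      ((a.1 = .x ∨ a.1 = .y ∨ a.1 = .z) → (b.1 ≠ .x ∧ b.1 ≠ .y ∧ b.1 ≠ .z)) ∧
      ((b.1 = .x ∨ b.1 = .y ∨ b.1 = .z) → (a.1 ≠ .x ∧ a.1 ≠ .y ∧ a.1 ≠ .z)) := by
    rintro a b ⟨t, ht, hc⟩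
    have hfam1 := rel_fam1 hm hn hp (show (t.1, t.2.1, t.2.2) ∈ relTriples m n p from ht)
    have hfam2 := rel_fam2 hm hn hp (show (t.1, t.2.1, t.2.2) ∈ relTriples m n p from ht)
    obtain ⟨h1x, h1y, h1z⟩ := fam_not_xyz hfam1
    obtain ⟨h2x, h2y, h2z⟩ := fam_not_xyz hfam2
    rcases hc with hc | hc | hc <;> rw [Prod.ext_iff] at hc <;> obtain ⟨rfl, rfl⟩ := hc <;>
      constructor <;> intro hh <;> simp_all
  rw [Link, SimpleGraph.fromRel_adj] at h
  obtain ⟨hne, h | h⟩ := h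
  · exact (key _ _ h).1 hxyz
  · exact (key _ _ h).2 hxyz

theorem walk_parity (hm : 3 ≤ m) (hn : 3 ≤ n) (hp : 3 ≤ p) {u v : LinkVert m n p}
    (w : (Link m n p).Walk u v) : (lvl u + w.length) % 2 = lvl v % 2 := by
  induction w with
  | nil => simp
  | cons hadj q ih =>
    have := adj_parity hm hn hp hadj
    simp only [SimpleGraph.Walk.length_cons]
    omega

theorem no_c4 (hm : 3 ≤ m) (hn : 3 ≤ n) (hp : 3 ≤ p) {v0 v1 v2 v3 : LinkVert m n p}
    (a01 : (Link m n p).Adj v0 v1) (a12 : (Link m n p).Adj v1 v2)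
    (a23 : (Link m n p).Adj v2 v3) (a30 : (Link m n p).Adj v3 v0)
    (h02 : v0 ≠ v2) (h13 : v1 ≠ v3) : False := by
  have p01 := adj_parity hm hn hp a01
  have p12 := adj_parity hm hn hp a12
  have p23 := adj_parity hm hn hp a23
  have p30 := adj_parity hm hn hp a30
  by_cases h0 : v0.1 = .x ∨ v0.1 = .y ∨ v0.1 = .z
  · -- middle pair is (v1, v3)
    obtain ⟨h1x, h1y, h1z⟩ := adj_xyz_other hm hn hp a01 h0
    obtain ⟨h3x, h3y, h3z⟩ := adj_xyz_other hm hn hp a30.symm h0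
    obtain ⟨g1, b1⟩ := v1
    obtain ⟨g3, b3⟩ := v3
    have e : lvl (g1, b1) % 2 = lvl (g3, b3) % 2 := by omega
    rw [lvl23 h1x h1y h1z, lvl23 h3x h3y h3z] at e
    have hb : b1 = b3 := by cases b1 <;> cases b3 <;> simp_all
    subst hb
    have hgg : g1 ≠ g3 := by simpa using h13
    cases b1
    · exact cn3 hm hn hp h1x h1y h1z h3x h3y h3z hgg h02 a01.symm a30 a12 a23.symm
    · exact cn2 hm hn hp h1x h1y h1z h3x h3y h3z hgg h02 a01.symm a30 a12 a23.symm
  · by_cases h2c : v2.1 = .x ∨ v2.1 = .y ∨ v2.1 = .z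
    · -- middle pair is (v1, v3) again
      obtain ⟨h1x, h1y, h1z⟩ := adj_xyz_other hm hn hp a12.symm h2c
      obtain ⟨h3x, h3y, h3z⟩ := adj_xyz_other hm hn hp a23 h2c
      obtain ⟨g1, b1⟩ := v1
      obtain ⟨g3, b3⟩ := v3
      have e : lvl (g1, b1) % 2 = lvl (g3, b3) % 2 := by omega
      rw [lvl23 h1x h1y h1z, lvl23 h3x h3y h3z] at e
      have hb : b1 = b3 := by cases b1 <;> cases b3 <;> simp_all
      subst hb
      have hgg : g1 ≠ g3 := by simpa using h13
      cases b1
      · exact cn3 hm hn hp h1x h1y h1z h3x h3y h3z hgg h02 a01.symm a30 a12 a23.symm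
      · exact cn2 hm hn hp h1x h1y h1z h3x h3y h3z hgg h02 a01.symm a30 a12 a23.symm
    · -- middle pair is (v0, v2)
      push_neg at h0 h2c
      obtain ⟨h0x, h0y, h0z⟩ := h0
      obtain ⟨h2x, h2y, h2z⟩ := h2c
      obtain ⟨g0, b0⟩ := v0
      obtain ⟨g2, b2⟩ := v2
      have e : lvl (g0, b0) % 2 = lvl (g2, b2) % 2 := by omega
      rw [lvl23 h0x h0y h0z, lvl23 h2x h2y h2z] at e
      have hb : b0 = b2 := by cases b0 <;> cases b2 <;> simp_all
      subst hb
      have hgg : g0 ≠ g2 := by simpa using h02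
      cases b0
      · exact cn3 hm hn hp h0x h0y h0z h2x h2y h2z hgg h13 a01 a12.symm a30.symm a23
      · exact cn2 hm hn hp h0x h0y h0z h2x h2y h2z hgg h13 a01 a12.symm a30.symm a23
end LinkAux

/-- If `m, n, p ≥ 3`, then every embedded cycle in the link graph
`L_{m,n,p}` has length at least 6. -/
theorem link_girth_ge_six (m n p : ℕ) (hm : 3 ≤ m) (hn : 3 ≤ n) (hp : 3 ≤ p) :
    ∀ (v : LinkVert m n p) (w : (Link m n p).Walk v v), w.IsCycle → 6 ≤ w.length := by
  intro v w hcyc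
  by_contra hlt
  push_neg at hlt
  have h3 := hcyc.three_le_length
  have hpar := LinkAux.walk_parity hm hn hp w
  have h4 : w.length = 4 := by omega
  clear hpar hlt h3
  cases w with
  | nil => simp at h4
  | cons a01 q1 =>
    cases q1 with
    | nil => simp at h4
    | cons a12 q2 =>
      cases q2 with
      | nil => simp at h4
      | cons a23 q3 =>
        cases q3 with
        | nil => simp at h4
        | cons a34 q4 =>
          cases q4 with
          | cons a45 q5 =>
            simp only [SimpleGraph.Walk.length_cons] at h4
            omega
          | nil =>
            have hnd := hcyc.support_nodup
            simp only [SimpleGraph.Walk.support_cons, SimpleGraph.Walk.support_nil,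
              List.tail_cons, List.nodup_cons, List.mem_cons, List.mem_singleton,
              List.not_mem_nil, List.nodup_nil] at hnd
            exact LinkAux.no_c4 hm hn hp a01 a12 a23 a34
              (fun hh => hnd.2.1 (Or.inr (Or.inl hh.symm))) (fun hh => hnd.1 (Or.inr (Or.inl hh)))
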